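/- Let k ≥ 2, q ≥ 1 and 1 ≤ s ≤ k−1 be natural numbers, and set n = k·q + s, r₁ = q·(k−s−1), r₂ = (q+1)·(s−1), n₁ = q·(k−s), n₂ = (q+1)·s. Then the characteristic polynomial of the adjacency matrix (over ℝ) of the Turán graph T(n,k) equals (X + q + 1)^{s−1} · (X + q)^{k−s−1} · X^{n−k} · (X² − (r₁+r₂)·X + (r₁·r₂ − n₁·n₂)). In particular r₁ + r₂ = n − 2q − 1. -/

import Mathlib

open Polynomial

open Matrix Finset

lemma card_fiber_mod (k q s r : ℕ) (hk : 0 < k) (hs : s < k) (hr : r < k) :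
    Fintype.card {v : Fin (k*q+s) // v.val % k = r} = (if r < s then q + 1 else q) := by
  set m := if r < s then q + 1 else q with hm
  have key : ∀ a : ℕ, a < m ↔ a * k + r < k * q + s := by
    intro a
    constructor
    · intro ha
      by_cases hrs : r < s
      · rw [hm, if_pos hrs] at ha
        have : a ≤ q := by omega
        calc a * k + r ≤ q * k + r := by
              exact Nat.add_le_add_right (Nat.mul_le_mul_right k this) r
          _ < k * q + s := by rw [Nat.mul_comm]; omega
      · rw [hm, if_neg hrs] at ha
        have h1 : a + 1 ≤ q := ha
        calc a * k + r < a * k + k := by omega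
          _ = (a+1) * k := by ring
          _ ≤ q * k := Nat.mul_le_mul_right k h1
          _ = k * q := Nat.mul_comm _ _
          _ ≤ k * q + s := Nat.le_add_right _ _
    · intro ha
      by_contra hma
      push_neg at hma
      have h1 : m * k + r ≤ a * k + r := Nat.add_le_add_right (Nat.mul_le_mul_right k hma) r
      by_cases hrs : r < s
      · rw [hm, if_pos hrs] at h1
        have : (q+1)*k = k*q + k := by ring
        omega
      · rw [hm, if_neg hrs] at h1
        have : q*k = k*q := Nat.mul_comm _ _
        omega
  have e : {v : Fin (k*q+s) // v.val % k = r} ≃ Fin m :=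
    { toFun := fun v => ⟨v.1.1 / k, by
        rw [key]
        have h1 := Nat.div_add_mod v.1.1 k
        have h2 := v.2
        have h3 := v.1.2
        have hc : v.1.1 / k * k = k * (v.1.1 / k) := Nat.mul_comm _ _
        omega⟩
      invFun := fun a => ⟨⟨a.1 * k + r, by rw [← key]; exact a.2⟩, by
        rw [Nat.mul_add_mod', Nat.mod_eq_of_lt hr]⟩
      left_inv := fun v => by
        apply Subtype.ext; apply Fin.ext
        simp only []
        have h1 := Nat.div_add_mod v.1.1 k
        have h2 := v.2
        have hc : v.1.1 / k * k = k * (v.1.1 / k) := Nat.mul_comm _ _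
        omega
      right_inv := fun a => by
        apply Fin.ext
        simp only []
        rw [Nat.add_comm, Nat.add_mul_div_right _ _ hk, Nat.div_eq_of_lt hr, Nat.zero_add] }
  rw [Fintype.card_congr e, Fintype.card_fin]

lemma det_smul_one_add_ones {β : Type*} [Fintype β] [DecidableEq β] [Nonempty β]
    {x : ℝ} (hx : x ≠ 0) :
    (x • (1 : Matrix β β ℝ) + Matrix.of fun _ _ => (1:ℝ)).det
      = x ^ (Fintype.card β - 1) * (x + Fintype.card β) := by
  have h1 : (Matrix.of fun _ _ => (1:ℝ) : Matrix β β ℝ)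
      = x • (Matrix.replicateCol Unit (fun _ => x⁻¹) * Matrix.replicateRow Unit fun _ => (1:ℝ)) := by
    ext i j
    simp [Matrix.mul_apply, hx]
  rw [h1, ← smul_add, Matrix.det_smul, Matrix.det_one_add_replicateCol_mul_replicateRow]
  obtain ⟨d, hd⟩ : ∃ d, Fintype.card β = d + 1 :=
    ⟨Fintype.card β - 1, (Nat.succ_pred_eq_of_pos Fintype.card_pos).symm⟩
  rw [hd]
  simp [dotProduct, Finset.card_univ, hd]
  field_simp
  ring

lemma sum_fin_ite {M : Type*} [AddCommMonoid M] (k s : ℕ) (hsk : s ≤ k) (A B : M) :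
    ∑ r : Fin k, (if r.val < s then A else B) = s • A + (k - s) • B := by
  rw [Fin.sum_univ_eq_sum_range (fun i => if i < s then A else B) k, Finset.range_eq_Ico,
    ← Finset.sum_Ico_consecutive _ (Nat.zero_le s) hsk]
  have h1 : ∑ i ∈ Finset.Ico 0 s, (if i < s then A else B) = s • A := by
    rw [Finset.sum_congr rfl (fun i hi => if_pos (Finset.mem_Ico.mp hi).2), Finset.sum_const]
    simp
  have h2 : ∑ i ∈ Finset.Ico s k, (if i < s then A else B) = (k - s) • B := by
    rw [Finset.sum_congr rfl (fun i hi => if_neg (by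
      have := (Finset.mem_Ico.mp hi).1; omega)), Finset.sum_const]
    simp
  rw [h1, h2]

lemma prod_fin_ite {M : Type*} [CommMonoid M] (k s : ℕ) (hsk : s ≤ k) (A B : M) :
    ∏ r : Fin k, (if r.val < s then A else B) = A ^ s * B ^ (k - s) := by
  rw [Fin.prod_univ_eq_prod_range (fun i => if i < s then A else B) k, Finset.range_eq_Ico,
    ← Finset.prod_Ico_consecutive _ (Nat.zero_le s) hsk]
  have h1 : ∏ i ∈ Finset.Ico 0 s, (if i < s then A else B) = A ^ s := by
    rw [Finset.prod_congr rfl (fun i hi => if_pos (Finset.mem_Ico.mp hi).2), Finset.prod_const]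
    simp
  have h2 : ∏ i ∈ Finset.Ico s k, (if i < s then A else B) = B ^ (k - s) := by
    rw [Finset.prod_congr rfl (fun i hi => if_neg (by
      have := (Finset.mem_Ico.mp hi).1; omega)), Finset.prod_const]
    simp
  rw [h1, h2]

lemma eval_charpoly_real {n : ℕ} (N : Matrix (Fin n) (Fin n) ℝ) (x : ℝ) :
    (N.charpoly).eval x = (x • (1 : Matrix (Fin n) (Fin n) ℝ) - N).det := by
  rw [Matrix.charpoly, ← Polynomial.coe_evalRingHom, RingHom.map_det]
  congr 1
  ext i j
  by_cases h : i = j <;>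
    simp [h, Matrix.charmatrix_apply_eq, Matrix.charmatrix_apply_ne, Matrix.one_apply,
      Matrix.sub_apply]

lemma nat_exp_sum (k q s : ℕ) (hq : 1 ≤ q) (hsk : s + 1 ≤ k) :
    s * q + (k - s) * (q - 1) = k * q + s - k := by
  obtain ⟨c, rfl⟩ : ∃ c, q = c + 1 := ⟨q - 1, by omega⟩
  have h1 : k * (c+1) = k*c + k := by ring
  have h2 : s * (c+1) = s*c + s := by ring
  have h3 : (k - s) * c = k*c - s*c := Nat.sub_mul _ _ _
  have h4 : s*c ≤ k*c := Nat.mul_le_mul_right c (by omega)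
  simp only [Nat.add_sub_cancel]
  omega


/-- The characteristic polynomial of the adjacency matrix (over `ℝ`) of the (irregular)
Turán graph `T(n,k)` with `n = k*q + s`, `1 ≤ s ≤ k - 1`, equals
`(X + q + 1)^(s-1) * (X + q)^(k-s-1) * X^(n-k) * (X² - (r₁+r₂)X + (r₁r₂ - n₁n₂))`,
where `r₁ = q*(k-s-1)`, `r₂ = (q+1)*(s-1)`, `n₁ = q*(k-s)`, `n₂ = (q+1)*s`.
In particular `r₁ + r₂ = n - 2q - 1`. -/
theorem charpoly_adjMatrix_turanGraph_irregular (k q s : ℕ) (hk : 2 ≤ k) (hq : 1 ≤ q)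
    (hs1 : 1 ≤ s) (hs2 : s ≤ k - 1) (n r₁ r₂ n₁ n₂ : ℕ)
    (hn : n = k * q + s) (hr₁ : r₁ = q * (k - s - 1)) (hr₂ : r₂ = (q + 1) * (s - 1))
    (hn₁ : n₁ = q * (k - s)) (hn₂ : n₂ = (q + 1) * s) :
    ((SimpleGraph.turanGraph n k).adjMatrix ℝ).charpoly =
      (X + C ((q : ℝ) + 1)) ^ (s - 1) * (X + C (q : ℝ)) ^ (k - s - 1) * X ^ (n - k) *
        (X ^ 2 - C ((r₁ : ℝ) + (r₂ : ℝ)) * X + C ((r₁ : ℝ) * (r₂ : ℝ) - (n₁ : ℝ) * (n₂ : ℝ)))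
    ∧ (r₁ : ℝ) + (r₂ : ℝ) = (n : ℝ) - 2 * q - 1 := by
  have hk0 : 0 < k := by omega
  have hsk : s + 1 ≤ k := by omega
  -- real cast facts
  have R1 : (r₁:ℝ) = q * ((k:ℝ) - s - 1) := by
    rw [hr₁]; push_cast [Nat.sub_sub, Nat.cast_sub hsk]; ring
  have R2 : (r₂:ℝ) = ((q:ℝ) + 1) * ((s:ℝ) - 1) := by
    rw [hr₂]; push_cast [Nat.cast_sub hs1]; ring
  have N1 : (n₁:ℝ) = q * ((k:ℝ) - s) := by
    rw [hn₁]; push_cast [Nat.cast_sub (by omega : s ≤ k)]; ring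
  have N2 : (n₂:ℝ) = ((q:ℝ) + 1) * s := by rw [hn₂]; push_cast; ring
  subst hn
  constructor
  swap
  · rw [R1, R2]; push_cast; ring
  apply Polynomial.eq_of_infinite_eval_eq
  apply Set.Infinite.mono (s := ({0, -(q:ℝ), -(q:ℝ)-1} : Set ℝ)ᶜ)
  swap
  · exact Set.Finite.infinite_compl (Set.toFinite _)
  intro x hx
  simp only [Set.mem_compl_iff, Set.mem_insert_iff, Set.mem_singleton_iff, not_or] at hx
  obtain ⟨hx0, hxq', hxq1'⟩ := hx
  have hxq : x + (q:ℝ) ≠ 0 := fun hc => hxq' (by linarith)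
  have hxq1 : x + (q:ℝ) + 1 ≠ 0 := fun hc => hxq1' (by linarith)
  simp only [Set.mem_setOf_eq]
  set n := k * q + s with hn
  -- the shifted matrix
  set A' : Matrix (Fin n) (Fin n) ℝ :=
    x • (1 : Matrix (Fin n) (Fin n) ℝ) +
      Matrix.of (fun v w : Fin n => if v.val % k = w.val % k then (1:ℝ) else 0) with hA'
  set b : Fin n → Fin k := fun v => ⟨v.val % k, Nat.mod_lt _ hk0⟩ with hb
  have hBT : A'.BlockTriangular b := by
    intro i j hij
    have hne : i.val % k ≠ j.val % k := by
      intro h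
      have : b i = b j := by apply Fin.ext; simpa [hb] using h
      rw [this] at hij; exact lt_irrefl _ hij
    have hij' : i ≠ j := fun h => hne (by rw [h])
    simp [hA', Matrix.one_apply, hij', hne]
  have hblock : ∀ r : Fin k, A'.toSquareBlock b r
      = x • (1 : Matrix {v // b v = r} {v // b v = r} ℝ) + Matrix.of fun _ _ => (1:ℝ) := by
    intro r
    ext i j
    have e2 : i.1.val % k = r.val := congrArg Fin.val i.2
    have e3 : j.1.val % k = r.val := congrArg Fin.val j.2
    have h1 : i.1.val % k = j.1.val % k := by omega
    simp [Matrix.toSquareBlock_def, hA', Matrix.one_apply, h1, Subtype.ext_iff]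
  set mN : ℕ → ℕ := fun r => if r < s then q + 1 else q with hmN
  have hcard : ∀ r : Fin k, Fintype.card {v // b v = r} = mN r.val := by
    intro r
    rw [Fintype.card_congr (Equiv.subtypeEquivRight (q := fun v : Fin n => v.val % k = r.val)
      (fun v => by constructor
                   · intro h; exact congrArg Fin.val h
                   · intro h; apply Fin.ext; simpa [hb] using h))]
    exact card_fiber_mod k q s r.val hk0 (by omega) r.isLt
  have hpos : ∀ r : Fin k, 0 < mN r.val := by
    intro r; rw [hmN]; dsimp only; split <;> omega
  have hdetA' : A'.det = ∏ r : Fin k, (x ^ (mN r.val - 1) * (x + (mN r.val : ℝ))) := by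
    rw [hBT.det_fintype]
    refine Finset.prod_congr rfl fun r _ => ?_
    haveI : Nonempty {v // b v = r} := by
      rw [← Fintype.card_pos_iff, hcard]; exact hpos r
    rw [hblock r, det_smul_one_add_ones hx0, hcard r]
  set μ : ℕ → ℝ := fun r => if r < s then (q:ℝ)+1 else (q:ℝ) with hmu
  have hμcast : ∀ r : ℕ, (mN r : ℝ) = μ r := by
    intro r; rw [hmN, hmu]; dsimp only; split <;> push_cast <;> ring
  have hμne : ∀ r : ℕ, x + μ r ≠ 0 := by
    intro r; rw [hmu]; dsimp only; split
    · intro h; apply hxq1; linarith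
    · exact hxq
  set w : Fin n → ℝ := fun v => -(x + μ (v.val % k))⁻¹ with hwdef
  have hwfib : ∀ u v : Fin n, u.val % k = v.val % k → w v = w u := by
    intro u v h; rw [hwdef]; dsimp only; rw [h]
  have hAw : A' *ᵥ w = fun _ => (-1:ℝ) := by
    funext u
    have expand : (A' *ᵥ w) u
        = (∑ v : Fin n, x * (if u = v then 1 else 0) * w v)
          + ∑ v : Fin n, (if u.val % k = v.val % k then (1:ℝ) else 0) * w v := by
      rw [hA']
      simp [Matrix.mulVec, dotProduct, Matrix.one_apply, add_mul, Finset.sum_add_distrib]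
    have e1 : (∑ v : Fin n, x * (if u = v then 1 else 0) * w v) = x * w u := by
      simp [mul_ite, ite_mul]
    have e2 : ∑ v : Fin n, (if u.val % k = v.val % k then (1:ℝ) else 0) * w v
        = (mN (u.val % k) : ℝ) * w u := by
      rw [Finset.sum_congr rfl (fun v _ => show (if u.val % k = v.val % k then (1:ℝ) else 0) * w v
          = (if u.val % k = v.val % k then (1:ℝ) else 0) * w u by
        by_cases h : u.val % k = v.val % k
        · rw [hwfib u v h]
        · simp [h])]
      rw [← Finset.sum_mul, Finset.sum_boole]
      congr 2
      have : (Finset.univ.filter fun v : Fin n => u.val % k = v.val % k)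
          = Finset.univ.filter fun v : Fin n => v.val % k = u.val % k := by
        apply Finset.filter_congr; intro v _; simp [eq_comm]
      rw [this, ← Fintype.card_subtype]
      rw [card_fiber_mod k q s (u.val % k) hk0 (by omega) (Nat.mod_lt _ hk0), hmN]
    rw [expand, e1, e2, hμcast]
    have hne := hμne (u.val % k)
    rw [hwdef]; dsimp only
    field_simp
    ring
  have hA'unit : IsUnit A'.det := by
    rw [hdetA']
    refine Ne.isUnit (Finset.prod_ne_zero_iff.mpr fun r _ => ?_)
    refine mul_ne_zero (pow_ne_zero _ hx0) ?_
    rw [hμcast]; exact hμne _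
  have hinv : A'⁻¹ *ᵥ (fun _ => (-1:ℝ)) = w := by
    rw [← hAw, Matrix.mulVec_mulVec, Matrix.nonsing_inv_mul A' hA'unit, Matrix.one_mulVec]
  have key : x • (1 : Matrix (Fin n) (Fin n) ℝ) - (SimpleGraph.turanGraph n k).adjMatrix ℝ
      = A' + Matrix.replicateCol Unit (fun _ => (-1:ℝ)) * Matrix.replicateRow Unit (fun _ => (1:ℝ)) := by
    ext i j
    rw [Matrix.sub_apply, SimpleGraph.adjMatrix_apply]
    simp [hA', Matrix.mul_apply, SimpleGraph.turanGraph_adj, Matrix.one_apply]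
    by_cases h : (i : Fin n).val % k = (j : Fin n).val % k <;> simp [h] <;> ring
  have hdet1 : (x • (1 : Matrix (Fin n) (Fin n) ℝ) - (SimpleGraph.turanGraph n k).adjMatrix ℝ).det
      = A'.det * (1 + ∑ v : Fin n, w v) := by
    rw [key, Matrix.det_add_replicateCol_mul_replicateRow hA'unit]
    congr 1
    rw [Matrix.det_unique]
    simp only [Matrix.add_apply, Matrix.one_apply_eq, Matrix.mul_apply, Matrix.replicateRow_apply,
      Matrix.replicateCol_apply, one_mul, Finset.univ_unique, Finset.sum_singleton]
    congr 1
    calc ∑ xx : Fin n, (∑ x1 : Fin n, A'⁻¹ x1 xx) * (-1:ℝ)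
        = ∑ x1 : Fin n, ∑ xx : Fin n, A'⁻¹ x1 xx * (-1) := by
          rw [← Finset.sum_comm]; exact Finset.sum_congr rfl fun xx _ => Finset.sum_mul _ _ _
      _ = ∑ x1 : Fin n, w x1 := Finset.sum_congr rfl fun x1 _ => congrFun hinv x1
  -- value of the block determinant product
  have hprod : ∏ r : Fin k, (x ^ (mN r.val - 1) * (x + (mN r.val : ℝ)))
      = x^(n-k) * ((x + ((q:ℝ)+1))^s * (x + (q:ℝ))^(k-s)) := by
    rw [Finset.prod_mul_distrib]
    have p1 : ∏ r : Fin k, x ^ (mN r.val - 1) = x ^ (n - k) := by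
      rw [Finset.prod_pow_eq_pow_sum]
      congr 1
      have hpt : ∀ r : Fin k, mN r.val - 1 = (if r.val < s then q else q - 1) := by
        intro r; rw [hmN]; dsimp only; split <;> omega
      rw [Finset.sum_congr rfl (fun r _ => hpt r), sum_fin_ite k s (by omega)]
      simp only [smul_eq_mul]
      rw [hn]
      exact nat_exp_sum k q s hq hsk
    have p2 : ∏ r : Fin k, (x + (mN r.val : ℝ))
        = (x + ((q:ℝ)+1))^s * (x + (q:ℝ))^(k-s) := by
      have hpt : ∀ r : Fin k, x + (mN r.val : ℝ)
          = (if r.val < s then x + ((q:ℝ)+1) else x + (q:ℝ)) := by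
        intro r; rw [hmN]; dsimp only; split <;> push_cast <;> ring
      rw [Finset.prod_congr rfl (fun r _ => hpt r), prod_fin_ite k s (by omega)]
    rw [p1, p2]
  -- value of the sum of w
  have hsumw : ∑ v : Fin n, w v
      = -((s:ℝ)*((q:ℝ)+1)*(x+(q:ℝ)+1)⁻¹ + ((k:ℝ)-(s:ℝ))*(q:ℝ)*(x+(q:ℝ))⁻¹) := by
    rw [← Finset.sum_fiberwise Finset.univ b w]
    have inner : ∀ r : Fin k, ∑ v ∈ Finset.univ.filter (fun v => b v = r), w v
        = (mN r.val : ℝ) * (-(x + μ r.val)⁻¹) := by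
      intro r
      rw [Finset.sum_congr rfl (fun v hv => show w v = -(x + μ r.val)⁻¹ by
        have hv' : b v = r := (Finset.mem_filter.mp hv).2
        have : v.val % k = r.val := congrArg Fin.val hv'
        rw [hwdef]; dsimp only; rw [this]), Finset.sum_const]
      have hc : (Finset.univ.filter fun v : Fin n => b v = r).card = mN r.val := by
        rw [← Fintype.card_subtype]; exact hcard r
      rw [hc, nsmul_eq_mul]
    rw [Finset.sum_congr rfl (fun r _ => inner r)]
    have hpt : ∀ r : Fin k, (mN r.val : ℝ) * (-(x + μ r.val)⁻¹)
        = (if r.val < s then -(((q:ℝ)+1)*(x+(q:ℝ)+1)⁻¹) else -((q:ℝ)*(x+(q:ℝ))⁻¹)) := by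
      intro r; rw [hmN, hmu]; dsimp only; split <;> push_cast <;> ring
    rw [Finset.sum_congr rfl (fun r _ => hpt r), sum_fin_ite k s (by omega)]
    rw [nsmul_eq_mul, nsmul_eq_mul, Nat.cast_sub (show s ≤ k by omega)]
    ring
  -- final scalar identity
  have hQ : ((x+(q:ℝ)+1) * (x+(q:ℝ)))
        * (1 - (s:ℝ)*((q:ℝ)+1)*(x+(q:ℝ)+1)⁻¹ - ((k:ℝ)-(s:ℝ))*(q:ℝ)*(x+(q:ℝ))⁻¹)
      = x^2 - ((r₁:ℝ)+(r₂:ℝ))*x + ((r₁:ℝ)*(r₂:ℝ) - (n₁:ℝ)*(n₂:ℝ)) := by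
    rw [R1, R2, N1, N2]
    field_simp
    ring
  -- evaluate both sides
  rw [eval_charpoly_real, hdet1, hdetA', hprod, hsumw]
  have hevR : eval x ((X + C ((q : ℝ) + 1)) ^ (s - 1) * (X + C (q : ℝ)) ^ (k - s - 1)
        * X ^ (n - k) *
        (X ^ 2 - C ((r₁ : ℝ) + (r₂ : ℝ)) * X + C ((r₁ : ℝ) * (r₂ : ℝ) - (n₁ : ℝ) * (n₂ : ℝ))))
      = (x + ((q:ℝ)+1))^(s-1) * (x + (q:ℝ))^(k-s-1) * x^(n-k)
        * (x^2 - ((r₁:ℝ)+(r₂:ℝ))*x + ((r₁:ℝ)*(r₂:ℝ) - (n₁:ℝ)*(n₂:ℝ))) := by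
    simp [eval_mul, eval_pow, eval_add, eval_sub, eval_C, eval_X]
  rw [hevR, ← hQ]
  have hps : (x + ((q:ℝ)+1))^s = (x + ((q:ℝ)+1))^(s-1) * (x + ((q:ℝ)+1)) := by
    conv_lhs => rw [show s = (s-1) + 1 by omega]
    rw [pow_succ]
  have hpk : (x + (q:ℝ))^(k-s) = (x + (q:ℝ))^(k-s-1) * (x + (q:ℝ)) := by
    conv_lhs => rw [show k - s = (k-s-1) + 1 by omega]
    rw [pow_succ]
  rw [hps, hpk]
  ring
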